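/- Let (G, B) be a metric n-Lie algebra with Levi decomposition G = S ⊕ R. Then the centralizer of R in G decomposes as C_G(R) = C(G) ⊕ R^⊥, and [S,...,S, R^⊥] = R^⊥. -/

import Mathlib

open scoped BigOperators

section NLiePreamble

variable {n : ℕ} {G : Type*} [AddCommGroup G] [Module ℂ G]

/-- The inner derivation `ad_y z = [y₁, …, y_{n+1}, z]` determined by an
`(n+2)`-ary alternating bracket. -/
def nAd (br : AlternatingMap ℂ G G (Fin (n + 2))) (y : Fin (n + 1) → G) (z : G) : G :=
  br (Fin.snoc y z)

/-- The generalized Jacobi identity: the bracket makes `G` an `(n+2)`-Lie algebra. -/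
def IsNLie (br : AlternatingMap ℂ G G (Fin (n + 2))) : Prop :=
  ∀ (x : Fin (n + 2) → G) (y : Fin (n + 1) → G),
    nAd br y (br x) = ∑ i, br (Function.update x i (nAd br y (x i)))

/-- A submodule `I` is an ideal: `[I, G, …, G] ⊆ I`. -/
def IsIdeal (br : AlternatingMap ℂ G G (Fin (n + 2))) (I : Submodule ℂ G) : Prop :=
  ∀ (y : Fin (n + 1) → G), ∀ x ∈ I, br (Fin.snoc y x) ∈ I

/-- Invariance of a bilinear form under the bracket. -/
def IsInvariantForm (br : AlternatingMap ℂ G G (Fin (n + 2)))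
    (K : LinearMap.BilinForm ℂ G) : Prop :=
  ∀ (x : Fin (n + 1) → G) (y₁ y₂ : G),
    K (br (Fin.snoc x y₁)) y₂ = - K (br (Fin.snoc x y₂)) y₁

/-- A metric on an `n`-Lie algebra: a nondegenerate invariant symmetric bilinear form. -/
def IsMetric (br : AlternatingMap ℂ G G (Fin (n + 2)))
    (B : LinearMap.BilinForm ℂ G) : Prop :=
  B.Nondegenerate ∧ (∀ x y : G, B x y = B y x) ∧ IsInvariantForm br B

/-- The span `[W₁, …, W_{n+2}]` of all brackets with entries in the given subspaces. -/
def bracketSpan (br : AlternatingMap ℂ G G (Fin (n + 2)))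
    (W : Fin (n + 2) → Submodule ℂ G) : Submodule ℂ G :=
  Submodule.span ℂ {z | ∃ w : Fin (n + 2) → G, (∀ i, w i ∈ W i) ∧ z = br w}

/-- The derived algebra `[G, …, G]`. -/
def derivedAlg (br : AlternatingMap ℂ G G (Fin (n + 2))) : Submodule ℂ G :=
  bracketSpan br fun _ => ⊤

/-- `[I, …, I]` for a subspace `I`. -/
def derivedStep (br : AlternatingMap ℂ G G (Fin (n + 2))) (I : Submodule ℂ G) :
    Submodule ℂ G :=
  bracketSpan br fun _ => I

/-- `[J, H, G, …, G]` for subspaces `J, H`. -/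
def pairBracket (br : AlternatingMap ℂ G G (Fin (n + 2))) (J H : Submodule ℂ G) :
    Submodule ℂ G :=
  bracketSpan br (Fin.cons J (Fin.cons H fun _ => (⊤ : Submodule ℂ G)))

/-- `[I, G, …, G]` for a subspace `I`. -/
def idealBracket (br : AlternatingMap ℂ G G (Fin (n + 2))) (I : Submodule ℂ G) :
    Submodule ℂ G :=
  bracketSpan br (Fin.cons I fun _ => (⊤ : Submodule ℂ G))

/-- The centralizer `C_G(I) = {x : [x, I, G, …, G] = 0}` of a subspace `I`. -/
def centralizer (br : AlternatingMap ℂ G G (Fin (n + 2))) (I : Submodule ℂ G) :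
    Submodule ℂ G where
  carrier := {x | ∀ v ∈ I, ∀ y : Fin n → G, br (Fin.cons x (Fin.cons v y)) = 0}
  add_mem' := by
    intro a b ha hb v hv y
    have := br.toMultilinearMap.cons_add (Fin.cons v y) a b
    simp only [AlternatingMap.coe_multilinearMap] at this
    rw [this, ha v hv y, hb v hv y, add_zero]
  zero_mem' := by
    intro v hv y
    have := br.toMultilinearMap.cons_smul (Fin.cons v y) (0 : ℂ) 0
    simpa using (br.toMultilinearMap.map_coord_zero (m := Fin.cons 0 (Fin.cons v y)) 0 rfl)
  smul_mem' := by
    intro c a ha v hv y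
    have := br.toMultilinearMap.cons_smul (Fin.cons v y) c a
    simp only [AlternatingMap.coe_multilinearMap] at this
    rw [this, ha v hv y, smul_zero]

/-- The center `C(G)`. -/
def center (br : AlternatingMap ℂ G G (Fin (n + 2))) : Submodule ℂ G :=
  centralizer br ⊤

/-- Nondegeneracy of `B` restricted to a subspace `W`. -/
def NondegOn (B : LinearMap.BilinForm ℂ G) (W : Submodule ℂ G) : Prop :=
  ∀ x ∈ W, (∀ y ∈ W, B x y = 0) → x = 0

/-- `(G, B)` is `B`-irreducible: no nontrivial nondegenerate ideals. -/
def BIrreducible (br : AlternatingMap ℂ G G (Fin (n + 2)))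
    (B : LinearMap.BilinForm ℂ G) : Prop :=
  ∀ I : Submodule ℂ G, IsIdeal br I → NondegOn B I → I = ⊥ ∨ I = ⊤

/-- `W` is a subalgebra. -/
def IsSubalgebra (br : AlternatingMap ℂ G G (Fin (n + 2))) (W : Submodule ℂ G) : Prop :=
  ∀ x : Fin (n + 2) → G, (∀ i, x i ∈ W) → br x ∈ W

/-- `I` is an ideal of the subalgebra `W`. -/
def IsIdealOf (br : AlternatingMap ℂ G G (Fin (n + 2))) (W I : Submodule ℂ G) : Prop :=
  I ≤ W ∧ ∀ (y : Fin (n + 1) → G), (∀ i, y i ∈ W) → ∀ x ∈ I, br (Fin.snoc y x) ∈ I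

/-- The subalgebra `W` is a simple `n`-Lie algebra. -/
def IsSimpleAlg (br : AlternatingMap ℂ G G (Fin (n + 2))) (W : Submodule ℂ G) : Prop :=
  derivedStep br W ≠ ⊥ ∧ ∀ I : Submodule ℂ G, IsIdealOf br W I → I = ⊥ ∨ I = W

/-- The subalgebra `W` is strong semisimple: a direct sum of simple ideals. -/
def IsStrongSemisimple (br : AlternatingMap ℂ G G (Fin (n + 2)))
    (W : Submodule ℂ G) : Prop :=
  ∃ (m : ℕ) (S : Fin m → Submodule ℂ G),
    (∀ i, IsIdealOf br W (S i) ∧ IsSimpleAlg br (S i)) ∧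
    iSupIndep S ∧ (⨆ i, S i) = W

/-- `I` is solvable (via the derived series). -/
def NLieSolvable (br : AlternatingMap ℂ G G (Fin (n + 2))) (I : Submodule ℂ G) : Prop :=
  ∃ k : ℕ, (derivedStep br)^[k] I = ⊥

/-- `R` is the radical: the maximal solvable ideal. -/
def NLieRadical (br : AlternatingMap ℂ G G (Fin (n + 2))) (R : Submodule ℂ G) : Prop :=
  IsIdeal br R ∧ NLieSolvable br R ∧
    ∀ I : Submodule ℂ G, IsIdeal br I → NLieSolvable br I → I ≤ R

/-- A Levi decomposition `G = S ⊕ R`. -/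
def IsLeviDecomp (br : AlternatingMap ℂ G G (Fin (n + 2)))
    (S R : Submodule ℂ G) : Prop :=
  NLieRadical br R ∧ IsSubalgebra br S ∧ IsStrongSemisimple br S ∧ IsCompl S R

/-- A minimal ideal of `G`. -/
def IsMinimalIdeal (br : AlternatingMap ℂ G G (Fin (n + 2))) (J : Submodule ℂ G) : Prop :=
  IsIdeal br J ∧ J ≠ ⊥ ∧
    ∀ I : Submodule ℂ G, IsIdeal br I → I ≤ J → I = ⊥ ∨ I = J

/-- The socle: the sum of all minimal ideals. -/
def socle (br : AlternatingMap ℂ G G (Fin (n + 2))) : Submodule ℂ G :=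
  sSup {J | IsMinimalIdeal br J}

/-- `H` is an `S`-submodule: `[S, …, S, H] ⊆ H`. -/
def IsSModule (br : AlternatingMap ℂ G G (Fin (n + 2))) (S H : Submodule ℂ G) : Prop :=
  ∀ (y : Fin (n + 1) → G), (∀ i, y i ∈ S) → ∀ x ∈ H, br (Fin.snoc y x) ∈ H

/-- `H` is an irreducible `S`-submodule. -/
def IsIrreducibleSModule (br : AlternatingMap ℂ G G (Fin (n + 2)))
    (S H : Submodule ℂ G) : Prop :=
  IsSModule br S H ∧ H ≠ ⊥ ∧
    ∀ K : Submodule ℂ G, K ≤ H → IsSModule br S K → K = ⊥ ∨ K = H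

/-- The space of invariant symmetric bilinear forms on `G`. -/
def invSymForms (br : AlternatingMap ℂ G G (Fin (n + 2))) :
    Submodule ℂ (LinearMap.BilinForm ℂ G) where
  carrier := {K | (∀ x y : G, K x y = K y x) ∧ IsInvariantForm br K}
  add_mem' := by
    rintro K L ⟨hK1, hK2⟩ ⟨hL1, hL2⟩
    refine ⟨fun x y => by simp [hK1 x y, hL1 x y], fun x y₁ y₂ => ?_⟩
    simp only [LinearMap.add_apply]
    rw [hK2 x y₁ y₂, hL2 x y₁ y₂]; ring
  zero_mem' := ⟨fun x y => by simp, fun x y₁ y₂ => by simp⟩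
  smul_mem' := by
    rintro c K ⟨hK1, hK2⟩
    refine ⟨fun x y => by simp [hK1 x y], fun x y₁ y₂ => ?_⟩
    simp only [LinearMap.smul_apply, smul_eq_mul]
    rw [hK2 x y₁ y₂]; ring

/-- The span of all nondegenerate invariant symmetric bilinear forms (the metric space `B(G)`). -/
def metricSpan (br : AlternatingMap ℂ G G (Fin (n + 2))) :
    Submodule ℂ (LinearMap.BilinForm ℂ G) :=
  Submodule.span ℂ {K : LinearMap.BilinForm ℂ G | IsMetric br K}

/-- `Γ_B(G)`: `B`-self-adjoint elements of the centroid. -/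
def centroidB (br : AlternatingMap ℂ G G (Fin (n + 2)))
    (B : LinearMap.BilinForm ℂ G) : Submodule ℂ (G →ₗ[ℂ] G) where
  carrier := {φ | (∀ (x : Fin (n + 1) → G) (z : G),
      φ (br (Fin.snoc x z)) = br (Fin.snoc x (φ z))) ∧
    ∀ x y : G, B (φ x) y = B x (φ y)}
  add_mem' := by
    rintro φ ψ ⟨hφ1, hφ2⟩ ⟨hψ1, hψ2⟩
    constructor
    · intro x z
      have hadd := br.toMultilinearMap.snoc_add x (φ z) (ψ z)
      simp only [AlternatingMap.coe_multilinearMap] at hadd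
      simp [hφ1 x z, hψ1 x z, hadd]
    · intro x y; simp [hφ2 x y, hψ2 x y]
  zero_mem' := by
    constructor
    · intro x z
      have h0 := br.toMultilinearMap.map_coord_zero (m := Fin.snoc x (0 : G)) (Fin.last _)
        (by simp)
      simp only [AlternatingMap.coe_multilinearMap] at h0
      simp [h0]
    · intro x y; simp
  smul_mem' := by
    rintro c φ ⟨hφ1, hφ2⟩
    constructor
    · intro x z
      have hs := br.toMultilinearMap.snoc_smul x c (φ z)
      simp only [AlternatingMap.coe_multilinearMap] at hs
      simp [hφ1 x z, hs]
    · intro x y; simp [hφ2 x y]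

end NLiePreamble


section MainProofAux

open LinearMap.BilinForm

variable {n : ℕ} {G : Type*} [AddCommGroup G] [Module ℂ G]

namespace NLieAux

variable (br : AlternatingMap ℂ G G (Fin (n + 2)))

/-- `ad` in the last slot, as a linear map. -/
def adL (y : Fin (n + 1) → G) : G →ₗ[ℂ] G where
  toFun z := br (Fin.snoc y z)
  map_add' a b := by
    have := br.toMultilinearMap.snoc_add y a b
    simpa using this
  map_smul' c a := by
    have := br.toMultilinearMap.snoc_smul y c a
    simpa using this

@[simp] lemma adL_apply (y : Fin (n + 1) → G) (z : G) :
    adL br y z = br (Fin.snoc y z) := rfl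

lemma unit_smul_mem_iff {W : Submodule ℂ G} (ε : ℤˣ) {z : G} :
    ε • z ∈ W ↔ z ∈ W := by
  rcases Int.units_eq_one_or ε with rfl | rfl <;>
    simp [Units.smul_def, neg_mem_iff]

lemma unit_smul_eq_zero_iff (ε : ℤˣ) {z : G} : ε • z = 0 ↔ z = 0 := by
  rcases Int.units_eq_one_or ε with rfl | rfl <;>
    simp [Units.smul_def, neg_eq_zero]

lemma snoc_eq_smul_cons (u : Fin (n + 1) → G) (x : G) :
    br (Fin.snoc u x) =
      Equiv.Perm.sign (finRotate (n + 2)) • br (Fin.cons x u) := by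
  have h : (Fin.snoc u x : Fin (n + 2) → G) = (Fin.cons x u) ∘ finRotate (n + 2) := by
    rw [Fin.snoc_eq_cons_rotate]; rfl
  rw [h, AlternatingMap.map_perm]

lemma cons_eq_smul_snoc (u : Fin (n + 1) → G) (x : G) :
    br (Fin.cons x u) =
      Equiv.Perm.sign (finRotate (n + 2)) • br (Fin.snoc u x) := by
  rw [snoc_eq_smul_cons, smul_smul, Int.units_mul_self, one_smul]

lemma mem_bracketSpan (W : Fin (n + 2) → Submodule ℂ G) (w : Fin (n + 2) → G)
    (hw : ∀ i, w i ∈ W i) : br w ∈ bracketSpan br W :=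
  Submodule.subset_span ⟨w, hw, rfl⟩

lemma bracketSpan_le {W : Fin (n + 2) → Submodule ℂ G} {P : Submodule ℂ G}
    (h : ∀ w : Fin (n + 2) → G, (∀ i, w i ∈ W i) → br w ∈ P) :
    bracketSpan br W ≤ P := by
  rw [bracketSpan, Submodule.span_le]
  rintro z ⟨w, hw, rfl⟩
  exact h w hw

/-- Pairing with `x` on the right, as a linear map. -/
def pairR (B : LinearMap.BilinForm ℂ G) (x : G) : G →ₗ[ℂ] ℂ where
  toFun z := B z x
  map_add' a b := by simp only [map_add, LinearMap.add_apply]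
  map_smul' c a := by simp only [map_smul, LinearMap.smul_apply, RingHom.id_apply,
    smul_eq_mul]

lemma span_ortho (B : LinearMap.BilinForm ℂ G) {W : Fin (n + 2) → Submodule ℂ G} {x : G}
    (h : ∀ w : Fin (n + 2) → G, (∀ i, w i ∈ W i) → B (br w) x = 0) :
    ∀ z ∈ bracketSpan br W, B z x = 0 := by
  intro z hz
  have hle : bracketSpan br W ≤ LinearMap.ker (pairR B x) := by
    apply bracketSpan_le
    intro w hw
    rw [LinearMap.mem_ker]
    exact h w hw
  have := hle hz
  rwa [LinearMap.mem_ker] at this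

lemma mem_idealBracket {I : Submodule ℂ G} {w : Fin (n + 2) → G} (i : Fin (n + 2))
    (hi : w i ∈ I) : br w ∈ idealBracket br I := by
  classical
  have h0 : br (w ∘ Equiv.swap 0 i) ∈ idealBracket br I := by
    apply mem_bracketSpan
    intro j
    refine Fin.cases ?_ (fun k => ?_) j
    · simpa [Equiv.swap_apply_left] using hi
    · simp [idealBracket]
  rw [AlternatingMap.map_perm] at h0
  exact (unit_smul_mem_iff _).mp h0

lemma idealBracket_le {I : Submodule ℂ G} (hI : IsIdeal br I) :
    idealBracket br I ≤ I := by
  apply bracketSpan_le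
  intro w hw
  have h0 : w 0 ∈ I := by simpa using hw 0
  have hw' : br w = Equiv.Perm.sign (finRotate (n + 2)) • br (Fin.snoc (Fin.tail w) (w 0)) := by
    conv_lhs => rw [← Fin.cons_self_tail w]
    exact cons_eq_smul_snoc br _ _
  rw [hw']
  exact (unit_smul_mem_iff _).mpr (hI _ _ h0)

lemma mem_centralizer_iff {I : Submodule ℂ G} {x : G} :
    x ∈ centralizer br I ↔
      ∀ u : Fin (n + 1) → G, u 0 ∈ I → br (Fin.snoc u x) = 0 := by
  have hmem : x ∈ centralizer br I ↔
      ∀ v ∈ I, ∀ y : Fin n → G, br (Fin.cons x (Fin.cons v y)) = 0 := Iff.rfl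
  rw [hmem]
  constructor
  · intro hx u hu
    rw [snoc_eq_smul_cons, unit_smul_eq_zero_iff]
    have h := hx (u 0) hu (Fin.tail u)
    rwa [Fin.cons_self_tail] at h
  · intro hx v hv y
    have h := hx (Fin.cons v y) (by simpa using hv)
    rw [snoc_eq_smul_cons, unit_smul_eq_zero_iff] at h
    exact h

variable (B : LinearMap.BilinForm ℂ G)

lemma centralizer_eq_orthogonal (hnd : B.Nondegenerate)
    (hinv : IsInvariantForm br B) (I : Submodule ℂ G) :
    centralizer br I = B.orthogonal (idealBracket br I) := by
  ext x
  rw [mem_centralizer_iff br, mem_orthogonal_iff]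
  constructor
  · intro hx z hz
    show B z x = 0
    refine span_ortho br B (fun w hww => ?_) z hz
    have h0 : w 0 ∈ I := by simpa using hww 0
    have hini : Fin.init w 0 ∈ I := h0
    conv_lhs => rw [← Fin.snoc_init_self w]
    rw [hinv (Fin.init w) (w (Fin.last _)) x, hx (Fin.init w) hini]
    simp
  · intro hx u hu
    refine hnd.1 _ fun a => ?_
    have hmem : br (Fin.snoc u a) ∈ idealBracket br I := by
      apply mem_bracketSpan
      intro j
      refine Fin.cases ?_ (fun k => ?_) j
      · show (Fin.snoc u a : Fin (n + 2) → G) 0 ∈ I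
        rw [show (0 : Fin (n + 2)) = Fin.castSucc 0 from (Fin.castSucc_zero).symm,
          Fin.snoc_castSucc]
        exact hu
      · simp [idealBracket]
    have h0 : B (br (Fin.snoc u a)) x = 0 := hx _ hmem
    rw [hinv u x a, h0, neg_zero]

lemma idealBracket_top : idealBracket br ⊤ = derivedAlg br := by
  unfold idealBracket derivedAlg
  congr 1
  funext i
  refine Fin.cases rfl (fun k => rfl) i

lemma center_eq_orthogonal (hnd : B.Nondegenerate) (hinv : IsInvariantForm br B) :
    center br = B.orthogonal (derivedAlg br) := by
  rw [center, centralizer_eq_orthogonal br B hnd hinv ⊤, idealBracket_top]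

lemma orthogonal_sup (U V : Submodule ℂ G) :
    B.orthogonal (U ⊔ V) = B.orthogonal U ⊓ B.orthogonal V := by
  apply le_antisymm
  · exact le_inf (orthogonal_le le_sup_left) (orthogonal_le le_sup_right)
  · intro x hx
    rw [mem_orthogonal_iff]
    intro z hz
    rcases Submodule.mem_sup.mp hz with ⟨u, hu, v, hv, rfl⟩
    have h1 : B u x = 0 := hx.1 u hu
    have h2 : B v x = 0 := hx.2 v hv
    show B (u + v) x = 0
    rw [map_add, LinearMap.add_apply, h1, h2, add_zero]

lemma orthogonal_inf [FiniteDimensional ℂ G] (hnd : B.Nondegenerate) (hrefl : B.IsRefl)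
    (U V : Submodule ℂ G) :
    B.orthogonal (U ⊓ V) = B.orthogonal U ⊔ B.orthogonal V := by
  conv_lhs => rw [← orthogonal_orthogonal hnd hrefl U, ← orthogonal_orthogonal hnd hrefl V]
  rw [← orthogonal_sup, orthogonal_orthogonal hnd hrefl]

lemma orthogonal_isIdeal (hsym : ∀ x y : G, B x y = B y x) (hinv : IsInvariantForm br B)
    {R : Submodule ℂ G} (hR : IsIdeal br R) : IsIdeal br (B.orthogonal R) := by
  intro y x hx
  rw [mem_orthogonal_iff]
  intro r hr
  show B r (br (Fin.snoc y x)) = 0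
  rw [hsym, hinv y x r]
  have h0 : B (br (Fin.snoc y r)) x = 0 := hx _ (hR y r hr)
  rw [h0, neg_zero]

lemma derivedStep_stable (hLie : IsNLie br) {S Si : Submodule ℂ G} (hSi : IsIdealOf br S Si)
    (y : Fin (n + 1) → G) (hy : ∀ i, y i ∈ S) {x : G} (hx : x ∈ derivedStep br Si) :
    br (Fin.snoc y x) ∈ derivedStep br Si := by
  classical
  have key : derivedStep br Si ≤ Submodule.comap (adL br y) (derivedStep br Si) := by
    apply bracketSpan_le
    intro w hw
    rw [Submodule.mem_comap, adL_apply]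
    have hj : nAd br y (br w) = ∑ i, br (Function.update w i (nAd br y (w i))) := hLie w y
    show nAd br y (br w) ∈ _
    rw [hj]
    apply Submodule.sum_mem
    intro j _
    apply mem_bracketSpan
    intro k
    rcases eq_or_ne k j with rfl | hk
    · rw [Function.update_self]
      exact hSi.2 y hy (w k) (hw k)
    · rw [Function.update_of_ne hk]
      exact hw k
  exact key hx

lemma simple_eq_derived (hLie : IsNLie br) {S Si : Submodule ℂ G}
    (hSi : IsIdealOf br S Si) (hsimp : IsSimpleAlg br Si) :
    derivedStep br Si = Si := by
  have hle : derivedStep br Si ≤ Si := by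
    apply bracketSpan_le
    intro w hw
    rw [← Fin.snoc_init_self w]
    exact hSi.2 (Fin.init w) (fun j => hSi.1 (hw _)) _ (hw _)
  have hid : IsIdealOf br Si (derivedStep br Si) :=
    ⟨hle, fun y hy x hx => derivedStep_stable br hLie hSi y (fun i => hSi.1 (hy i)) hx⟩
  rcases hsimp.2 _ hid with h | h
  · exact absurd h hsimp.1
  · exact h

lemma semisimple_le_derived (hLie : IsNLie br) {S : Submodule ℂ G}
    (hss : IsStrongSemisimple br S) : S ≤ derivedAlg br := by
  obtain ⟨m, Si, hprops, hindep, hsup⟩ := hss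
  rw [← hsup]
  apply iSup_le
  intro i
  rw [← simple_eq_derived br hLie (hprops i).1 (hprops i).2]
  apply Submodule.span_mono
  rintro z ⟨w, hw, rfl⟩
  exact ⟨w, fun k => Submodule.mem_top, rfl⟩

lemma eq_zero_of_central (hLie : IsNLie br) {S : Submodule ℂ G}
    (hss : IsStrongSemisimple br S) {a : G} (ha : a ∈ S)
    (hz : ∀ y : Fin (n + 1) → G, (∀ i, y i ∈ S) → br (Fin.snoc y a) = 0) :
    a = 0 := by
  classical
  obtain ⟨m, Si, hprops, hindep, hsup⟩ := hss
  rw [← hsup, Submodule.mem_iSup_iff_exists_finsupp] at ha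
  obtain ⟨f, hf, hfs⟩ := ha
  have hcomp : ∀ (y : Fin (n + 1) → G), (∀ i, y i ∈ S) → ∀ i, br (Fin.snoc y (f i)) = 0 := by
    intro y hy i
    set g : Fin m → G := fun j => br (Fin.snoc y (f j)) with hg
    have hsum : ∑ j, g j = 0 := by
      have h1 : (adL br y) (f.sum fun _ x => x) = 0 := by
        rw [hfs]; exact hz y hy
      rw [Finsupp.sum, map_sum] at h1
      have h2 : ∑ j ∈ f.support, g j = 0 := h1
      calc ∑ j : Fin m, g j = ∑ j ∈ f.support, g j := by
            refine (Finset.sum_subset (Finset.subset_univ f.support) fun j _ hj => ?_).symm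
            have hj0 : f j = 0 := Finsupp.notMem_support_iff.mp hj
            show br (Fin.snoc y (f j)) = 0
            rw [hj0]
            exact (adL br y).map_zero
        _ = 0 := h2
    have hgi : g i ∈ Si i := (hprops i).1.2 y hy (f i) (hf i)
    have hrest : ∑ j ∈ Finset.univ.erase i, g j ∈ ⨆ j, ⨆ (_ : j ≠ i), Si j := by
      apply Submodule.sum_mem
      intro j hj
      have hji : j ≠ i := (Finset.mem_erase.mp hj).1
      exact Submodule.mem_iSup_of_mem j
        (Submodule.mem_iSup_of_mem hji ((hprops j).1.2 y hy (f j) (hf j)))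
    have h3 : g i + ∑ j ∈ Finset.univ.erase i, g j = 0 := by
      rw [Finset.add_sum_erase _ g (Finset.mem_univ i), hsum]
    have hei : g i = -∑ j ∈ Finset.univ.erase i, g j := eq_neg_of_add_eq_zero_left h3
    have hmem : g i ∈ Si i ⊓ (⨆ j, ⨆ (_ : j ≠ i), Si j) :=
      ⟨hgi, by rw [hei]; exact neg_mem hrest⟩
    have hd : Si i ⊓ (⨆ j, ⨆ (_ : j ≠ i), Si j) = ⊥ := (hindep i).eq_bot
    rw [hd] at hmem
    simpa using hmem
  have hfi : ∀ i, f i = 0 := by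
    intro i
    set K : Submodule ℂ G :=
      ⨅ (y : {y : Fin (n + 1) → G // ∀ k, y k ∈ S}), LinearMap.ker (adL br y.1) with hK
    have hmemK : ∀ z : G, z ∈ K ↔
        ∀ y : Fin (n + 1) → G, (∀ k, y k ∈ S) → br (Fin.snoc y z) = 0 := by
      intro z
      simp only [hK, Submodule.mem_iInf, LinearMap.mem_ker, adL_apply]
      exact ⟨fun h y hy => h ⟨y, hy⟩, fun h y => h y.1 y.2⟩
    have hZideal : IsIdealOf br (Si i) (Si i ⊓ K) := by
      refine ⟨inf_le_left, ?_⟩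
      intro y hy x hx
      have h0 : br (Fin.snoc y x) = 0 :=
        (hmemK x).mp hx.2 y (fun k => (hprops i).1.1 (hy k))
      rw [h0]; exact Submodule.zero_mem _
    rcases (hprops i).2.2 _ hZideal with hbot | htop
    · have hm : f i ∈ Si i ⊓ K := ⟨hf i, (hmemK (f i)).mpr (fun y hy => hcomp y hy i)⟩
      rw [hbot] at hm
      simpa using hm
    · exfalso
      apply (hprops i).2.1
      apply le_bot_iff.mp
      apply bracketSpan_le
      intro w hw
      have hlast : w (Fin.last (n + 1)) ∈ Si i ⊓ K := htop.ge (hw _)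
      have hrw : br w = br (Fin.snoc (Fin.init w) (w (Fin.last (n + 1)))) := by
        rw [Fin.snoc_init_self]
      rw [hrw, (hmemK _).mp hlast.2 (Fin.init w) (fun k => (hprops i).1.1 (hw _))]
      exact Submodule.zero_mem ⊥
  rw [← hfs, Finsupp.sum]
  exact Finset.sum_eq_zero fun j _ => hfi j

lemma derived_le_sup (S R : Submodule ℂ G) (hSR : S ⊔ R = ⊤) :
    derivedAlg br ≤ derivedStep br S ⊔ idealBracket br R := by
  classical
  apply bracketSpan_le
  intro w _
  have hw : ∀ i, ∃ a ∈ S, ∃ b ∈ R, a + b = w i := by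
    intro i
    have : w i ∈ S ⊔ R := by rw [hSR]; trivial
    exact Submodule.mem_sup.mp this
  choose a ha b hb hab using hw
  have hwab : w = a + b := by
    funext i
    rw [Pi.add_apply, hab i]
  rw [hwab, show (br (a + b) : G) = br.toMultilinearMap (a + b) from rfl,
    br.toMultilinearMap.map_add_univ a b]
  apply Submodule.sum_mem
  intro t _
  have hcoe : br.toMultilinearMap (t.piecewise a b) = br (t.piecewise a b) := rfl
  rw [hcoe]
  rcases eq_or_ne t Finset.univ with rfl | ht
  · apply Submodule.mem_sup_left
    apply mem_bracketSpan
    intro i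
    rw [Finset.piecewise_univ]
    exact ha i
  · obtain ⟨i, hi⟩ : ∃ i, i ∉ t := by
      by_contra h
      push_neg at h
      exact ht (Finset.eq_univ_iff_forall.mpr h)
    apply Submodule.mem_sup_right
    apply mem_idealBracket br i
    rw [Finset.piecewise_eq_of_notMem _ _ _ hi]
    exact hb i

lemma idealBracket_eq_inf {S R : Submodule ℂ G} (hcompl : IsCompl S R)
    (hSsub : IsSubalgebra br S) (hR : IsIdeal br R) :
    idealBracket br R = derivedAlg br ⊓ R := by
  apply le_antisymm
  · refine le_inf ?_ (idealBracket_le br hR)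
    apply bracketSpan_le
    intro w hw
    exact mem_bracketSpan br _ w (fun i => Submodule.mem_top)
  · intro z hz
    have h1 : z ∈ derivedStep br S ⊔ idealBracket br R :=
      derived_le_sup br S R hcompl.codisjoint.eq_top hz.1
    rcases Submodule.mem_sup.mp h1 with ⟨u, hu, v, hv, rfl⟩
    have huS : u ∈ S := by
      have hstep : derivedStep br S ≤ S := bracketSpan_le br (fun w hw => hSsub w hw)
      exact hstep hu
    have hvR : v ∈ R := idealBracket_le br hR hv
    have huR : u ∈ R := by
      have hu' : u = (u + v) - v := by abel
      rw [hu']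
      exact Submodule.sub_mem _ hz.2 hvR
    have hu0 : u = 0 := Submodule.disjoint_def.mp hcompl.disjoint u huS huR
    rw [hu0, zero_add]
    exact hv

end NLieAux

end MainProofAux

variable {n : ℕ} {G : Type*} [AddCommGroup G] [Module ℂ G]

theorem centralizer_radical_decomp
    (br : AlternatingMap ℂ G G (Fin (n + 2))) (hLie : IsNLie br)
    [FiniteDimensional ℂ G]
    (B : LinearMap.BilinForm ℂ G) (hB : IsMetric br B)
    (S R : Submodule ℂ G) (hLevi : IsLeviDecomp br S R) :
    centralizer br R = center br ⊔ B.orthogonal R ∧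
    center br ⊓ B.orthogonal R = ⊥ ∧
    bracketSpan br (Fin.snoc (fun _ : Fin (n + 1) => S) (B.orthogonal R)) =
      B.orthogonal R := by
  classical
  open NLieAux LinearMap.BilinForm in
  obtain ⟨hnd, hsym, hinv⟩ := hB
  obtain ⟨⟨hRid, -, -⟩, hSsub, hss, hcompl⟩ := hLevi
  have hrefl : B.IsRefl := fun x y h => by rw [hsym y x]; exact h
  have hd1 : derivedAlg br ⊔ R = ⊤ := by
    rw [eq_top_iff, ← hcompl.codisjoint.eq_top]
    exact sup_le_sup_right (semisimple_le_derived br hLie hss) R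
  have hcent : centralizer br R = B.orthogonal (idealBracket br R) :=
    centralizer_eq_orthogonal br B hnd hinv R
  have hcenter : center br = B.orthogonal (derivedAlg br) :=
    center_eq_orthogonal br B hnd hinv
  refine ⟨?_, ?_, ?_⟩
  · rw [hcent, hcenter, idealBracket_eq_inf br hcompl hSsub hRid,
      orthogonal_inf B hnd hrefl]
  · rw [hcenter, ← orthogonal_sup, hd1, orthogonal_top_eq_bot hnd]
  · set T := bracketSpan br (Fin.snoc (fun _ : Fin (n + 1) => S) (B.orthogonal R)) with hT
    have hTgen : ∀ (s : Fin (n + 1) → G), (∀ k, s k ∈ S) → ∀ z ∈ B.orthogonal R,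
        br (Fin.snoc s z) ∈ T := by
      intro s hs z hz
      apply mem_bracketSpan
      intro i
      refine Fin.lastCases ?_ (fun j => ?_) i
      · rw [Fin.snoc_last, Fin.snoc_last]; exact hz
      · rw [Fin.snoc_castSucc, Fin.snoc_castSucc]; exact hs j
    have hRo : IsIdeal br (B.orthogonal R) := orthogonal_isIdeal br B hsym hinv hRid
    have hTle : T ≤ B.orthogonal R := by
      apply bracketSpan_le
      intro w hw
      have hl : w (Fin.last (n + 1)) ∈ B.orthogonal R := by
        have h := hw (Fin.last (n + 1))
        rwa [Fin.snoc_last] at h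
      rw [← Fin.snoc_init_self w]
      exact hRo (Fin.init w) _ hl
    have hToR : B.orthogonal T ≤ R := by
      intro x hx
      have hbr : ∀ (s : Fin (n + 1) → G), (∀ k, s k ∈ S) → br (Fin.snoc s x) ∈ R := by
        intro s hs
        rw [← orthogonal_orthogonal hnd hrefl R, mem_orthogonal_iff]
        intro z hz
        show B z (br (Fin.snoc s x)) = 0
        rw [hsym, hinv s x z]
        have h0 : B (br (Fin.snoc s z)) x = 0 := hx _ (hTgen s hs z hz)
        rw [h0, neg_zero]
      have hxT : x ∈ S ⊔ R := by rw [hcompl.codisjoint.eq_top]; trivial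
      rcases Submodule.mem_sup.mp hxT with ⟨u, hu, v, hv, rfl⟩
      have hu0 : u = 0 := by
        apply eq_zero_of_central br hLie hss hu
        intro y hy
        have h1 : br (Fin.snoc y u) ∈ S := by
          apply hSsub
          intro i
          refine Fin.lastCases ?_ (fun j => ?_) i
          · rw [Fin.snoc_last]; exact hu
          · rw [Fin.snoc_castSucc]; exact hy j
        have h2 : br (Fin.snoc y u) ∈ R := by
          have hxR : br (Fin.snoc y (u + v)) ∈ R := hbr y hy
          have hvR : br (Fin.snoc y v) ∈ R := hRid y v hv
          have hsplit : br (Fin.snoc y u) =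
              br (Fin.snoc y (u + v)) - br (Fin.snoc y v) := by
            have hadd := (adL br y).map_add u v
            simp only [adL_apply] at hadd
            rw [hadd, add_sub_cancel_right]
          rw [hsplit]
          exact Submodule.sub_mem _ hxR hvR
        exact Submodule.disjoint_def.mp hcompl.disjoint _ h1 h2
      rw [hu0, zero_add]
      exact hv
    refine le_antisymm hTle ?_
    calc B.orthogonal R ≤ B.orthogonal (B.orthogonal T) := orthogonal_le hToR
      _ = T := orthogonal_orthogonal hnd hrefl T
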